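/- Assume α > λ+δ and let V be a standard value-function candidate. Then B ∩ (−p/α, 0) = ∅. -/

import Mathlib

open MeasureTheory Set Filter

noncomputable section

/-- Drift coefficient: c(x) = p + r x for x ≥ 0, c(x) = p + α x for x < 0. -/
def drift (p r a x : ℝ) : ℝ := if 0 ≤ x then p + r * x else p + a * x

/-- I_v(x) = ∫_{(0, x+p/α]} v(x−u) dμ(u). -/
def Iop (p a : ℝ) (mu : Measure ℝ) (v : ℝ → ℝ) (x : ℝ) : ℝ :=
  ∫ u in Set.Ioc (0 : ℝ) (x + p / a), v (x - u) ∂mu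

/-- L_{v,φ}(x) = c(x)·φ′(x) − (λ+δ)·v(x) + λ·I_v(x). -/
def Lphi (p lam d r a : ℝ) (mu : Measure ℝ) (v phi : ℝ → ℝ) (x : ℝ) : ℝ :=
  drift p r a x * deriv phi x - (lam + d) * v x + lam * Iop p a mu v x

/-- G_v(x) = c(x) − (λ+δ)·v(x) + λ·I_v(x). -/
def Gop (p lam d r a : ℝ) (mu : Measure ℝ) (v : ℝ → ℝ) (x : ℝ) : ℝ :=
  drift p r a x - (lam + d) * v x + lam * Iop p a mu v x

/-- Viscosity sub-solution of the HJB equation on J ⊆ (−p/α,∞). -/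
def IsViscSubsol (p lam d r a : ℝ) (mu : Measure ℝ) (u : ℝ → ℝ) (J : Set ℝ) : Prop :=
  ∀ x ∈ J, ∀ phi : ℝ → ℝ, ContDiff ℝ 1 phi → phi x = u x →
    (∀ y ∈ Set.Ici (-(p / a)), u y - phi y ≤ u x - phi x) →
    0 ≤ max (1 - deriv phi x) (Lphi p lam d r a mu u phi x)

/-- Viscosity super-solution of the HJB equation on J ⊆ (−p/α,∞). -/
def IsViscSupersol (p lam d r a : ℝ) (mu : Measure ℝ) (u : ℝ → ℝ) (J : Set ℝ) : Prop :=
  ∀ x ∈ J, ∀ phi : ℝ → ℝ, ContDiff ℝ 1 phi → phi x = u x →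
    (∀ y ∈ Set.Ici (-(p / a)), u x - phi x ≤ u y - phi y) →
    max (1 - deriv phi x) (Lphi p lam d r a mu u phi x) ≤ 0

/-- Viscosity solution: both sub- and super-solution. -/
def IsViscSol (p lam d r a : ℝ) (mu : Measure ℝ) (u : ℝ → ℝ) (J : Set ℝ) : Prop :=
  IsViscSubsol p lam d r a mu u J ∧ IsViscSupersol p lam d r a mu u J

/-- Locally Lipschitz on a set. -/
def LocLipOn (s : Set ℝ) (u : ℝ → ℝ) : Prop :=
  ∀ x ∈ s, ∃ K : NNReal, ∃ eps : ℝ, 0 < eps ∧ LipschitzOnWith K u (s ∩ Metric.ball x eps)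

/-- Linear growth bound on [−p/α,∞). -/
def LinGrowth (p a : ℝ) (u : ℝ → ℝ) : Prop :=
  ∃ c₁ c₂ : ℝ, ∀ x : ℝ, -(p / a) ≤ x → u x ≤ c₁ * x + c₂

/-- Standard value-function candidate. -/
structure IsCandidate (p lam d r a : ℝ) (mu : Measure ℝ) (V : ℝ → ℝ) : Prop where
  cont : ContinuousOn V (Set.Ici (-(p / a)))
  nonneg : ∀ x ∈ Set.Ici (-(p / a)), 0 ≤ V x
  mono : MonotoneOn V (Set.Ici (-(p / a)))
  boundary : V (-(p / a)) = 0
  slope : ∀ x y : ℝ, -(p / a) ≤ x → x ≤ y → y - x ≤ V y - V x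
  growth : ∀ x : ℝ, 0 ≤ x → V x ≤ (d * x + p) / (d - r) + p / a
  locLip : LocLipOn (Set.Ioi (-(p / a))) V
  visc : IsViscSol p lam d r a mu V (Set.Ioi (-(p / a)))
  derivLim : ∀ x ∈ Set.Ioi (-(p / a)), ∀ (h : ℕ → ℝ) (dd : ℝ),
      ((∀ n, 0 < h n) ∨ (∀ n, h n < 0)) →
      Filter.Tendsto h Filter.atTop (nhds 0) →
      Filter.Tendsto (fun n => (V (x + h n) - V x) / h n) Filter.atTop (nhds dd) →
      1 ≤ dd ∧ dd * drift p r a x - (lam + d) * V x + lam * Iop p a mu V x ≤ 0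

/-- The set A = {x ∈ [−p/α,∞) : G_V(x) = 0}. -/
def setA (p lam d r a : ℝ) (mu : Measure ℝ) (V : ℝ → ℝ) : Set ℝ :=
  {x | x ∈ Set.Ici (-(p / a)) ∧ Gop p lam d r a mu V x = 0}

/-- The set B = {x ∈ [−p/α,∞) : V′(x) exists, V′(x) = 1 and G_V(x) < 0}. -/
def setB (p lam d r a : ℝ) (mu : Measure ℝ) (V : ℝ → ℝ) : Set ℝ :=
  {x | x ∈ Set.Ici (-(p / a)) ∧ DifferentiableAt ℝ V x ∧ deriv V x = 1 ∧
      Gop p lam d r a mu V x < 0}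

/-- The set C = [−p/α,∞) \ (A ∪ B). -/
def setC (p lam d r a : ℝ) (mu : Measure ℝ) (V : ℝ → ℝ) : Set ℝ :=
  Set.Ici (-(p / a)) \ (setA p lam d r a mu V ∪ setB p lam d r a mu V)

lemma aux_integrableOn {p a : ℝ} (mu : Measure ℝ) [IsFiniteMeasure mu] {V : ℝ → ℝ}
    (hcont : ContinuousOn V (Set.Ici (-(p/a)))) {x : ℝ} (hx : -(p/a) ≤ x) :
    MeasureTheory.IntegrableOn (fun u => V (x - u)) (Set.Ioc 0 (x + p/a)) mu := by
  have hmap : Set.MapsTo (fun u : ℝ => x - u) (Set.Icc 0 (x + p/a)) (Set.Ici (-(p/a))) := by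
    intro u hu
    simp only [Set.mem_Ici]
    have h1 := hu.1
    have h2 := hu.2
    simp only [Set.mem_Icc] at *
    linarith [hu.2]
  have hc : ContinuousOn (fun u => V (x - u)) (Set.Icc 0 (x + p/a)) :=
    hcont.comp ((continuous_const.sub continuous_id).continuousOn) hmap
  exact (hc.integrableOn_compact isCompact_Icc).mono_set Set.Ioc_subset_Icc_self

lemma aux_Iop_nonneg {p a : ℝ} (mu : Measure ℝ) {V : ℝ → ℝ}
    (hnn : ∀ y ∈ Set.Ici (-(p/a)), 0 ≤ V y) (x : ℝ) :
    0 ≤ Iop p a mu V x := by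
  apply MeasureTheory.setIntegral_nonneg measurableSet_Ioc
  intro u hu
  exact hnn _ (by simp only [Set.mem_Ici]; linarith [hu.2])

lemma aux_Iop_mono {p a : ℝ} (mu : Measure ℝ) [IsFiniteMeasure mu] {V : ℝ → ℝ}
    (hcont : ContinuousOn V (Set.Ici (-(p/a))))
    (hmono : MonotoneOn V (Set.Ici (-(p/a))))
    (hnn : ∀ y ∈ Set.Ici (-(p/a)), 0 ≤ V y)
    {w z : ℝ} (hw : -(p/a) ≤ w) (hwz : w ≤ z) :
    Iop p a mu V w ≤ Iop p a mu V z := by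
  unfold Iop
  have hIz := aux_integrableOn mu hcont (le_trans hw hwz)
  have hIzw : IntegrableOn (fun u => V (z - u)) (Set.Ioc 0 (w + p/a)) mu :=
    hIz.mono_set (Set.Ioc_subset_Ioc_right (by linarith))
  have hIw := aux_integrableOn mu hcont hw
  calc ∫ u in Set.Ioc 0 (w+p/a), V (w-u) ∂mu
      ≤ ∫ u in Set.Ioc 0 (w+p/a), V (z-u) ∂mu := by
        apply setIntegral_mono_on hIw hIzw measurableSet_Ioc
        intro u hu
        exact hmono (by simp only [Set.mem_Ici]; linarith [hu.2])
          (by simp only [Set.mem_Ici]; linarith [hu.2]) (by linarith)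
    _ ≤ ∫ u in Set.Ioc 0 (z+p/a), V (z-u) ∂mu := by
        apply setIntegral_mono_set hIz
        · filter_upwards [ae_restrict_mem measurableSet_Ioc] with u hu
          exact hnn _ (by simp only [Set.mem_Ici]; linarith [hu.2])
        · exact (Set.Ioc_subset_Ioc_right (by linarith)).eventuallyLE

set_option maxHeartbeats 1000000 in
lemma extension_lemma
    (p lam d r a : ℝ) (hp : 0 < p) (hlam : 0 < lam) (hd : 0 < d)
    (hr : 0 < r) (hra : r < a) (hrd : r < d)
    (mu : Measure ℝ) [IsProbabilityMeasure mu]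
    (hald : lam + d < a)
    (V : ℝ → ℝ)
    (hcont : ContinuousOn V (Set.Ici (-(p/a))))
    (hnn : ∀ y ∈ Set.Ici (-(p/a)), 0 ≤ V y)
    (hmono : MonotoneOn V (Set.Ici (-(p/a))))
    (hgrowth : ∀ x : ℝ, 0 ≤ x → V x ≤ (d * x + p) / (d - r) + p / a)
    (hsubsol : IsViscSubsol p lam d r a mu V (Set.Ioi (-(p/a))))
    (x0 : ℝ) (hx0l : -(p/a) < x0) (hx0r : x0 < 0)
    (Hdiff : DifferentiableAt ℝ V x0) (Hder : deriv V x0 = 1)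
    (HG : Gop p lam d r a mu V x0 < 0)
    (zs : ℝ) (hzsl : -(p/a) < zs) (hzsu : zs ≤ x0)
    (haff : ∀ y ∈ Set.Icc zs x0, V y - V zs = y - zs) :
    ∃ ε > 0, -(p/a) < zs - ε ∧ ∀ z ∈ Set.Ico (zs - ε) zs, V zs - V z ≤ zs - z := by
  have ha : 0 < a := hr.trans hra
  have hPa : 0 < p/a := div_pos hp ha
  have hld : 0 < lam + d := by linarith
  have hdzs : drift p r a zs = p + a * zs := by
    unfold drift; rw [if_neg (by push_neg; linarith)]
  have hdx0 : drift p r a x0 = p + a * x0 := by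
    unfold drift; rw [if_neg (by push_neg; linarith)]
  have hVx0zs : V x0 - V zs = x0 - zs := haff x0 ⟨hzsu, le_refl _⟩
  have hImono : Iop p a mu V zs ≤ Iop p a mu V x0 :=
    aux_Iop_mono mu hcont hmono hnn hzsl.le hzsu
  have hImul : lam * Iop p a mu V zs ≤ lam * Iop p a mu V x0 :=
    mul_le_mul_of_nonneg_left hImono hlam.le
  have hGx0eq : Gop p lam d r a mu V x0
      = p + a*x0 - (lam+d)*V x0 + lam*Iop p a mu V x0 := by
    unfold Gop; rw [hdx0]
  have hGzseq : Gop p lam d r a mu V zs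
      = p + a*zs - (lam+d)*V zs + lam*Iop p a mu V zs := by
    unfold Gop; rw [hdzs]
  have hGzs : Gop p lam d r a mu V zs < 0 := by
    rw [hGzseq]
    rw [hGx0eq] at HG
    have hmulV : (lam+d)*(V x0 - V zs) = (lam+d)*(x0-zs) := by rw [hVx0zs]
    have hmul2 : 0 ≤ (a - (lam+d))*(x0-zs) :=
      mul_nonneg (by linarith) (by linarith)
    linarith only [HG, hImul, hmulV, hmul2]
  obtain ⟨g, hgdef⟩ : ∃ g : ℝ, g = Gop p lam d r a mu V zs := ⟨_, rfl⟩
  have hg : g < 0 := by rw [hgdef]; exact hGzs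
  have hgeq : g = p + a*zs - (lam+d)*V zs + lam*Iop p a mu V zs := by
    rw [hgdef, hGzseq]
  -- continuity at zs within Ici
  have hcw : ContinuousWithinAt V (Set.Ici (-(p/a))) zs := hcont.continuousWithinAt hzsl.le
  have hη : 0 < -g / (2 * (lam + d)) := div_pos (by linarith) (by linarith)
  obtain ⟨ε1, hε1, hε1p⟩ := Metric.tendsto_nhdsWithin_nhds.mp hcw.tendsto _ hη
  have hzsP : 0 < zs + p/a := by linarith
  obtain ⟨ε, hεdef⟩ : ∃ e : ℝ, e = min ε1 (zs + p/a) / 2 := ⟨_, rfl⟩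
  have hεpos : 0 < ε := by
    rw [hεdef]; have := lt_min hε1 hzsP; linarith
  have hεε1 : ε < ε1 := by
    have h1 : min ε1 (zs + p/a) ≤ ε1 := min_le_left _ _
    rw [hεdef]; linarith
  have hεP : -(p/a) < zs - ε := by
    have h1 : min ε1 (zs + p/a) ≤ zs + p/a := min_le_right _ _
    rw [hεdef]; linarith
  -- G bound on window
  have hGw : ∀ w, zs - ε ≤ w → w ≤ zs →
      p + a*w - (lam+d)*V w + lam*Iop p a mu V w ≤ g / 2 := by
    intro w hw1 hw2
    have hwIci : -(p/a) ≤ w := by linarith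
    have hVw : dist (V w) (V zs) < -g / (2 * (lam + d)) := by
      apply hε1p (Set.mem_Ici.mpr hwIci)
      rw [Real.dist_eq, abs_of_nonpos (by linarith)]
      linarith
    have hVw' : V zs - V w < -g / (2 * (lam + d)) := by
      rw [Real.dist_eq] at hVw
      have := abs_lt.mp hVw
      linarith [this.1]
    have hVw'' : (lam + d) * (V zs - V w) < -g / 2 := by
      calc (lam+d) * (V zs - V w) < (lam+d) * (-g/(2*(lam+d))) :=
            (mul_lt_mul_iff_right₀ hld).mpr hVw'
        _ = -g/2 := by field_simp
    have hIw : Iop p a mu V w ≤ Iop p a mu V zs :=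
      aux_Iop_mono mu hcont hmono hnn hwIci hw2
    have hIwm : lam * Iop p a mu V w ≤ lam * Iop p a mu V zs :=
      mul_le_mul_of_nonneg_left hIw hlam.le
    have haw : a * w ≤ a * zs := mul_le_mul_of_nonneg_left hw2 ha.le
    linarith only [hVw'', hIwm, haw, hgeq]
  -- bound machinery constants
  obtain ⟨m0, hm0def⟩ : ∃ m0 : ℝ, m0 = 1 + (-g) / (4*p) := ⟨_, rfl⟩
  have hm0 : 1 < m0 := by
    have h0 : 0 < (-g)/(4*p) := div_pos (by linarith) (by linarith)
    rw [hm0def]; linarith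
  have hpm0 : p * (m0 - 1) = -g/4 := by
    rw [hm0def]; field_simp; ring
  -- growth constants
  have hdr : (0:ℝ) < d - r := by linarith
  obtain ⟨c1, hc1def⟩ : ∃ c : ℝ, c = d / (d - r) := ⟨_, rfl⟩
  obtain ⟨c2, hc2def⟩ : ∃ c : ℝ, c = p / (d - r) + p / a := ⟨_, rfl⟩
  have hc1 : 0 < c1 := by rw [hc1def]; positivity
  have hc2 : 0 < c2 := by rw [hc2def]; positivity
  have hgrow' : ∀ y : ℝ, 0 ≤ y → V y ≤ c1 * y + c2 := by
    intro y hy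
    have h5 := hgrowth y hy
    have heq : (d * y + p) / (d - r) + p / a = c1 * y + c2 := by
      rw [hc1def, hc2def]; field_simp; ring
    linarith only [h5, heq]
  -- the core claim
  have core : ∀ z, zs - ε ≤ z → z < zs → ∀ m, 1 < m → m ≤ m0 →
      V zs - V z ≤ m * (zs - z) := by
    intro z hz1 hz2 m hm1 hm2
    by_contra hcon
    push_neg at hcon
    have hzIci : -(p/a) < z := by linarith
    have hIccsub : Set.Icc z zs ⊆ Set.Ici (-(p/a)) := fun y hy => by
      simp only [Set.mem_Ici]; linarith [hy.1]
    have hθc : ContinuousOn (fun y => V y - m * y) (Set.Icc z zs) :=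
      (hcont.mono hIccsub).sub ((continuous_const.mul continuous_id).continuousOn)
    obtain ⟨w, hwmem, hwmax⟩ :=
      isCompact_Icc.exists_isMaxOn (Set.nonempty_Icc.mpr hz2.le) hθc
    have hwmax' : ∀ y ∈ Set.Icc z zs, V y - m*y ≤ V w - m*w := hwmax
    have hθzw := hwmax' z ⟨le_refl _, hz2.le⟩
    have hθzsw := hwmax' zs ⟨hz2.le, le_refl _⟩
    have hwz : z < w := by
      rcases lt_or_eq_of_le hwmem.1 with h | h
      · exact h
      · exfalso; rw [← h] at hθzsw; linarith only [hcon, hθzsw]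
    have hwzs : w ≤ zs := hwmem.2
    have hwneg : w < 0 := by linarith
    have hwIci : -(p/a) < w := by linarith
    -- derivative bound near x0
    have hder1 : HasDerivAt V 1 x0 := by
      have := Hdiff.hasDerivAt; rwa [Hder] at this
    have hlo := (hasDerivAt_iff_isLittleO.mp hder1).def (show (0:ℝ) < m - 1 by linarith)
    obtain ⟨ρ, hρ, hρp⟩ := Metric.eventually_nhds_iff.mp hlo
    have hρbound : ∀ y, x0 < y → y < x0 + ρ → V y ≤ V x0 + m * (y - x0) := by
      intro y hy1 hy2
      have hdist : dist y x0 < ρ := by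
        rw [Real.dist_eq, abs_of_pos (by linarith)]; linarith
      have h6 := hρp hdist
      simp only [smul_eq_mul, mul_one, Real.norm_eq_abs] at h6
      rw [abs_of_pos (show (0:ℝ) < y - x0 by linarith)] at h6
      have h2 := (abs_le.mp h6).2
      linarith only [h2]
    -- key comparison values
    have hVzle : V z ≤ V w + m * (z - w) := by linarith only [hθzw]
    have hVzsle : V zs ≤ V w + m * (zs - w) := by linarith only [hθzsw]
    have hVx0le : V x0 ≤ V w + m * (x0 - w) := by
      have h1 : V x0 - V zs = x0 - zs := haff x0 ⟨hzsu, le_refl _⟩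
      have hmm : 0 ≤ (m-1)*(x0-zs) := mul_nonneg (by linarith) (by linarith)
      linarith only [h1, hVzsle, hmm]
    -- choose K
    have hV0nn : 0 ≤ V 0 := hnn 0 (Set.mem_Ici.mpr (by linarith))
    obtain ⟨K, hKdef⟩ : ∃ K : ℝ,
        K = max (max (m/(w-z)) (V 0/ρ^2)) (max (c1/ρ) (c2/(ρ*(-w)))) := ⟨_, rfl⟩
    have hK0 : 0 ≤ K := by
      have h1 : c1/ρ ≤ K := hKdef ▸ le_trans (le_max_left _ _) (le_max_right _ _)
      have h2 : 0 ≤ c1/ρ := div_nonneg hc1.le hρ.le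
      linarith only [h1, h2]
    have hKq : ∀ y : ℝ, 0 ≤ K * (y - w)^2 := fun y => mul_nonneg hK0 (sq_nonneg _)
    have hK1 : m ≤ K * (w - z) := by
      have h1 : m/(w-z) ≤ K := hKdef ▸ le_trans (le_max_left _ _) (le_max_left _ _)
      rw [div_le_iff₀ (by linarith)] at h1
      linarith only [h1]
    have hK2 : V 0 ≤ K * ρ^2 := by
      have h1 : V 0/ρ^2 ≤ K := hKdef ▸ le_trans (le_max_right _ _) (le_max_left _ _)
      rw [div_le_iff₀ (by positivity)] at h1
      linarith only [h1]
    have hK3 : c1 ≤ K * ρ := by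
      have h1 : c1/ρ ≤ K := hKdef ▸ le_trans (le_max_left _ _) (le_max_right _ _)
      rw [div_le_iff₀ hρ] at h1
      linarith only [h1]
    have hK4 : c2 ≤ K * (ρ * (-w)) := by
      have h1 : c2/(ρ*(-w)) ≤ K := hKdef ▸ le_trans (le_max_right _ _) (le_max_right _ _)
      rw [div_le_iff₀ (mul_pos hρ (by linarith : (0:ℝ) < -w))] at h1
      linarith only [h1]
    -- the test function
    obtain ⟨φ, hφdef⟩ : ∃ φ : ℝ → ℝ,
        φ = fun y => V w + (m * (y - w) + K * (y - w)^2) := ⟨_, rfl⟩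
    have hφw : φ w = V w := by rw [hφdef]; simp
    have hφC : ContDiff ℝ 1 φ := by
      rw [hφdef]
      apply ContDiff.add contDiff_const
      exact (contDiff_const.mul (contDiff_id.sub contDiff_const)).add
        (contDiff_const.mul ((contDiff_id.sub contDiff_const).pow 2))
    have hφd : deriv φ w = m := by
      rw [hφdef]
      have hd1 : HasDerivAt (fun y : ℝ => y - w) 1 w := (hasDerivAt_id w).sub_const w
      have hd2 : HasDerivAt (fun y => m * (y - w)) (m * 1) w := hd1.const_mul m
      have hd3 : HasDerivAt (fun y : ℝ => (y - w)^2) (((2:ℕ):ℝ) * (w - w)^(2-1) * 1) w :=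
        hd1.pow 2
      have hd4 : HasDerivAt (fun y : ℝ => K * (y-w)^2)
          (K * (((2:ℕ):ℝ) * (w - w)^(2-1) * 1)) w := hd3.const_mul K
      have hd5 : HasDerivAt (fun y => V w + (m * (y - w) + K * (y - w)^2))
          (m * 1 + K * (((2:ℕ):ℝ) * (w - w)^(2-1) * 1)) w :=
        (hd2.add hd4).const_add (V w)
      rw [hd5.deriv]
      simp
    -- global domination
    have hφge : ∀ y ∈ Set.Ici (-(p/a)), V y ≤ φ y := by
      intro y hy
      simp only [Set.mem_Ici] at hy
      rw [hφdef]
      simp only []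
      rcases le_or_gt y z with hyz | hyz
      · -- y ≤ z
        have hVy : V y ≤ V z := hmono (Set.mem_Ici.mpr hy) (Set.mem_Ici.mpr hzIci.le) hyz
        have h1 : (w-z)*(w-y) ≤ (y-w)^2 := by
          have := mul_nonneg (show (0:ℝ) ≤ w-y by linarith) (show (0:ℝ) ≤ z-y by linarith)
          linarith only [this]
        have h2 : K*((w-z)*(w-y)) ≤ K*(y-w)^2 := mul_le_mul_of_nonneg_left h1 hK0
        have h3 : m*(w-y) ≤ (K*(w-z))*(w-y) :=
          mul_le_mul_of_nonneg_right hK1 (by linarith)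
        have h4 : 0 ≤ m*(w-z) := mul_nonneg (by linarith) (by linarith)
        linarith only [hVy, hVzle, h2, h3, h4]
      · rcases le_or_gt y zs with hyzs | hyzs
        · -- z < y ≤ zs
          have h5 := hwmax' y ⟨hyz.le, hyzs⟩
          linarith only [h5, hKq y]
        · rcases le_or_gt y x0 with hyx0 | hyx0
          · -- zs < y ≤ x0
            have h1 : V y - V zs = y - zs := haff y ⟨hyzs.le, hyx0⟩
            have hmzs : 0 ≤ (m-1)*(y-zs) := mul_nonneg (by linarith) (by linarith)
            linarith only [h1, hVzsle, hKq y, hmzs]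
          · rcases lt_or_ge y (x0 + ρ) with hyρ | hyρ
            · -- x0 < y < x0 + ρ
              have h1 := hρbound y hyx0 hyρ
              linarith only [h1, hVx0le, hKq y]
            · -- y ≥ x0 + ρ
              have hyw : ρ ≤ y - w := by linarith
              have hrq : ρ^2 ≤ (y-w)^2 := by
                have := mul_nonneg (show (0:ℝ) ≤ y-w-ρ by linarith)
                  (show (0:ℝ) ≤ y-w+ρ by linarith)
                linarith only [this]
              have hmw : 0 ≤ m * (y - w) := mul_nonneg (by linarith) (by linarith)
              have hVwnn : 0 ≤ V w := hnn w (Set.mem_Ici.mpr hwIci.le)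
              rcases le_or_gt y 0 with hy0 | hy0
              · have hVy : V y ≤ V 0 :=
                  hmono (Set.mem_Ici.mpr hy) (Set.mem_Ici.mpr (by linarith)) hy0
                have h7 : K * ρ^2 ≤ K * (y-w)^2 := mul_le_mul_of_nonneg_left hrq hK0
                linarith only [hVy, hK2, h7, hVwnn, hmw]
              · have hVy : V y ≤ c1 * y + c2 := hgrow' y hy0.le
                have h1 : K * (ρ * (y-w)) ≤ K * (y-w)^2 := by
                  apply mul_le_mul_of_nonneg_left _ hK0
                  have := mul_nonneg (show (0:ℝ) ≤ y-w by linarith)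
                    (show (0:ℝ) ≤ y-w-ρ by linarith)
                  linarith only [this]
                have h2 : c1 * y ≤ (K * ρ) * y :=
                  mul_le_mul_of_nonneg_right hK3 hy0.le
                have h3 : K * (ρ * (y - w)) = (K*ρ)*y + K*(ρ*(-w)) := by ring
                linarith only [hVy, h1, h2, h3, hK4, hmw, hVwnn]
    -- apply subsolution at w
    have hsub := hsubsol w (Set.mem_Ioi.mpr hwIci) φ hφC hφw
      (fun y hy => by
        rw [hφw]
        have := hφge y hy
        linarith only [this])
    have hLeq : Lphi p lam d r a mu V φ w =
        (p + a * w) * m - (lam+d) * V w + lam * Iop p a mu V w := by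
      unfold Lphi drift
      rw [hφd, if_neg (by push_neg; linarith)]
    have hdwp : a * w ≤ 0 := by
      have h := mul_nonneg ha.le (show (0:ℝ) ≤ -w by linarith)
      linarith only [h]
    have hdwpos : 0 < p + a * w := by
      have h := (mul_lt_mul_iff_right₀ ha).mpr hwIci
      have h2 : a * -(p/a) = -p := by field_simp
      rw [h2] at h
      linarith only [h]
    have hGww := hGw w (by linarith) (by linarith)
    have hL1 : (p + a * w) * (m - 1) ≤ p * (m0 - 1) := by
      calc (p + a*w) * (m-1) ≤ p * (m-1) :=
            mul_le_mul_of_nonneg_right (by linarith only [hdwp]) (by linarith)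
        _ ≤ p * (m0-1) := mul_le_mul_of_nonneg_left (by linarith) hp.le
    have hLneg : Lphi p lam d r a mu V φ w < 0 := by
      rw [hLeq]
      have hexp : (p + a*w) * m - (lam+d)*V w + lam * Iop p a mu V w
          = (p + a*w - (lam+d)*V w + lam * Iop p a mu V w) + (p + a*w) * (m-1) := by
        ring
      rw [hexp]
      linarith only [hGww, hL1, hpm0, hg]
    have hmaxlt : max (1 - deriv φ w) (Lphi p lam d r a mu V φ w) < 0 :=
      max_lt (by rw [hφd]; linarith) hLneg
    linarith only [hsub, hmaxlt]
  -- conclude by letting m → 1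
  refine ⟨ε, hεpos, hεP, ?_⟩
  intro z hz
  obtain ⟨hz1, hz2⟩ := hz
  by_contra hcon
  push_neg at hcon
  have ht : 0 < zs - z := by linarith
  have hΔ : 0 < V zs - V z - (zs - z) := by linarith
  obtain ⟨m, hmdef⟩ : ∃ m : ℝ,
      m = min m0 (1 + (V zs - V z - (zs - z))/(2*(zs - z))) := ⟨_, rfl⟩
  have hm1 : 1 < m := by
    rw [hmdef]
    exact lt_min hm0 (by have : 0 < (V zs - V z - (zs - z))/(2*(zs-z)) := div_pos hΔ (by linarith); linarith)
  have hm2 : m ≤ m0 := hmdef ▸ min_le_left _ _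
  have hcore := core z hz1 hz2 m hm1 hm2
  have h3 : m * (zs - z) ≤ (1 + (V zs - V z - (zs - z))/(2*(zs - z))) * (zs - z) :=
    mul_le_mul_of_nonneg_right (hmdef ▸ min_le_right _ _) (by linarith)
  have h4 : (1 + (V zs - V z - (zs - z))/(2*(zs - z))) * (zs - z)
      = (zs - z) + (V zs - V z - (zs - z))/2 := by
    field_simp
  linarith only [hcore, h3, h4, hΔ]

theorem stmt12
    (p lam d r a : ℝ) (hp : 0 < p) (hlam : 0 < lam) (hd : 0 < d)
    (hr : 0 < r) (hra : r < a) (hrd : r < d)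
    (mu : Measure ℝ) [IsProbabilityMeasure mu] (hmu : mu (Set.Iic 0) = 0)
    (hald : lam + d < a)
    (V : ℝ → ℝ) (hV : IsCandidate p lam d r a mu V) :
    setB p lam d r a mu V ∩ Set.Ioo (-(p / a)) 0 = ∅ := by
  have ha : 0 < a := hr.trans hra
  have hPa : 0 < p / a := div_pos hp ha
  have hld : 0 < lam + d := by linarith
  rw [Set.eq_empty_iff_forall_notMem]
  intro x0 hx0
  obtain ⟨hxB, hxI⟩ := hx0
  obtain ⟨hx0i, Hdiff, Hder, HG⟩ := hxB
  obtain ⟨hx0l, hx0r⟩ := hxI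
  have hx0P : 0 < x0 + p/a := by linarith
  -- the set T of "affine distances"
  have hFc : ContinuousOn (fun t => V x0 - V (x0 - t) - t) (Set.Icc 0 (x0 + p/a)) := by
    apply ContinuousOn.sub _ continuousOn_id
    apply ContinuousOn.sub continuousOn_const
    exact hV.cont.comp ((continuous_const.sub continuous_id).continuousOn)
      (fun t ht => by simp only [Set.mem_Ici]; linarith [ht.2])
  set T : Set ℝ := {t | t ∈ Set.Icc (0:ℝ) (x0 + p/a) ∧ V x0 - V (x0 - t) - t ≤ 0} with hT
  have hTclosed : IsClosed T :=
    hFc.preimage_isClosed_of_isClosed isClosed_Icc isClosed_Iic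
  have hTcompact : IsCompact T :=
    isCompact_Icc.of_isClosed_subset hTclosed (fun t ht => ht.1)
  have hT0 : (0:ℝ) ∈ T := ⟨⟨le_refl 0, hx0P.le⟩, by simp⟩
  have htsmem := hTcompact.sSup_mem ⟨0, hT0⟩
  set ts := sSup T with htsdef
  obtain ⟨⟨hts0, htsub⟩, htsF⟩ := htsmem
  have hdx0 : drift p r a x0 = p + a*x0 := by
    unfold drift; rw [if_neg (by push_neg; linarith)]
  have hGeq : Gop p lam d r a mu V x0
      = p + a*x0 - (lam+d)*V x0 + lam*Iop p a mu V x0 := by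
    unfold Gop; rw [hdx0]
  rcases eq_or_lt_of_le htsub with heq | hlt
  · -- ts = x0 + p/a : then V x0 ≤ x0 + p/a, contradiction with G(x0) < 0
    have h1 : x0 - ts = -(p/a) := by rw [heq]; ring
    rw [h1, hV.boundary] at htsF
    have hVb : V x0 ≤ x0 + p/a := by linarith only [htsF, heq]
    have hI := aux_Iop_nonneg mu hV.nonneg x0
    have hIm : 0 ≤ lam * Iop p a mu V x0 := mul_nonneg hlam.le hI
    have hVm : (lam+d) * V x0 ≤ (lam+d) * (x0 + p/a) :=
      mul_le_mul_of_nonneg_left hVb hld.le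
    have hmul : (lam+d)*(x0+p/a) < a*(x0+p/a) :=
      mul_lt_mul_of_pos_right hald hx0P
    have hpeq : a * (p/a) = p := by field_simp
    linarith only [HG, hGeq, hVm, hIm, hmul, hpeq]
  · -- ts < x0 + p/a : extend the affine region, contradicting sSup
    set zs := x0 - ts with hzs
    have hzsl : -(p/a) < zs := by simp only [hzs]; linarith
    have hzsu : zs ≤ x0 := by simp only [hzs]; linarith
    have haff : ∀ y ∈ Set.Icc zs x0, V y - V zs = y - zs := by
      intro y hy
      have h1 := hV.slope zs y hzsl.le hy.1
      have h2 := hV.slope y x0 (by linarith [hy.1]) hy.2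
      have h3 : V x0 - V zs ≤ x0 - zs := by
        simp only [hzs]
        linarith only [htsF]
      linarith only [h1, h2, h3]
    obtain ⟨ε, hε, hεP, hstep⟩ := extension_lemma p lam d r a hp hlam hd hr hra hrd
      mu hald V hV.cont hV.nonneg hV.mono hV.growth hV.visc.1
      x0 hx0l hx0r Hdiff Hder HG zs hzsl hzsu haff
    have he : 0 < min ε (x0 + p/a - ts) := lt_min hε (by linarith)
    have hemin1 : min ε (x0 + p/a - ts) ≤ ε := min_le_left _ _
    have hemin2 : min ε (x0 + p/a - ts) ≤ x0 + p/a - ts := min_le_right _ _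
    have h1 : ts + min ε (x0 + p/a - ts) / 2 ∈ T := by
      refine ⟨⟨by linarith, by linarith⟩, ?_⟩
      have hz : x0 - (ts + min ε (x0 + p/a - ts) / 2) ∈ Set.Ico (zs - ε) zs := by
        constructor
        · simp only [hzs]; linarith
        · simp only [hzs]; linarith
      have h2 := hstep _ hz
      have h3 : V x0 - V zs ≤ ts := by
        simp only [hzs]; linarith only [htsF]
      show V x0 - V (x0 - (ts + min ε (x0 + p/a - ts) / 2))
          - (ts + min ε (x0 + p/a - ts) / 2) ≤ 0
      have h4 : zs - (x0 - (ts + min ε (x0 + p/a - ts) / 2))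
          = min ε (x0 + p/a - ts) / 2 := by simp only [hzs]; ring
      linarith only [h2, h3, h4]
    have h4 : ts + min ε (x0 + p/a - ts) / 2 ≤ ts :=
      le_csSup ⟨x0 + p/a, fun t ht => ht.1.2⟩ h1
    linarith only [h4, he]
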